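/- Let (Ω,T) be a dynamical system and A : Ω → SL(2,R) continuous. If there exist L > 0 and N ∈ ℕ such that (1/k) log‖A_k(ω)‖ < L for all ω ∈ Ω and all k with N ≤ k ≤ 2N, then (1/n) log‖A_n(ω)‖ < L for all ω ∈ Ω and all n ≥ N. -/

import Mathlib

open scoped Matrix.Norms.L2Operator
open Filter Topology MeasureTheory

noncomputable abbrev SL2 := Matrix.SpecialLinearGroup (Fin 2) ℝ

noncomputable instance : MetricSpace SL2 :=
  MetricSpace.induced (fun B => (B : Matrix (Fin 2) (Fin 2) ℝ))
    (fun _ _ h => Subtype.ext h) inferInstance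

/-- The `n`-step cocycle iterate `A_n(ω) = A(T^{n-1}ω) ⋯ A(ω)`. -/
noncomputable def coc {Ω : Type*} (T : Ω → Ω) (A : Ω → SL2) : ℕ → Ω → SL2
  | 0, _ => 1
  | n + 1, ω => coc T A n (T ω) * A ω

/-- `log ‖A_n(ω)‖`, using the operator norm on 2×2 real matrices. -/
noncomputable def cocNorm {Ω : Type*} (T : Ω → Ω) (A : Ω → SL2) (n : ℕ) (ω : Ω) : ℝ :=
  Real.log ‖(coc T A n ω : Matrix (Fin 2) (Fin 2) ℝ)‖

/-- Uniform hyperbolicity: `liminf (1/n) log ‖A_n(ω)‖ ≥ L > 0` uniformly in `ω`. -/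
def UniformlyHyperbolic {Ω : Type*} (T : Ω → Ω) (A : Ω → SL2) : Prop :=
  ∃ L > (0 : ℝ), ∀ ε > (0 : ℝ), ∃ N : ℕ, ∀ n ≥ N, ∀ ω,
    L - ε < (1 / n : ℝ) * cocNorm T A n ω

/-- `(1/n) log ‖A_n(ω)‖ → L` uniformly in `ω`. -/
def TendsUniformlyToConst {Ω : Type*} (T : Ω → Ω) (A : Ω → SL2) (L : ℝ) : Prop :=
  ∀ ε > (0 : ℝ), ∃ N : ℕ, ∀ n ≥ N, ∀ ω,
    |(1 / n : ℝ) * cocNorm T A n ω - L| < ε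

/-- A uniform cocycle. -/
def IsUniformCocycle {Ω : Type*} (T : Ω → Ω) (A : Ω → SL2) : Prop :=
  ∃ L : ℝ, TendsUniformlyToConst T A L

/-- Uniform behavior: uniformly hyperbolic, or `(1/n) log ‖A_n(ω)‖ → 0` uniformly. -/
def HasUniformBehavior {Ω : Type*} (T : Ω → Ω) (A : Ω → SL2) : Prop :=
  UniformlyHyperbolic T A ∨ TendsUniformlyToConst T A 0

private lemma coc_add {Ω : Type*} (T : Ω → Ω) (A : Ω → SL2) (a b : ℕ) (ω : Ω) :
    coc T A (a + b) ω = coc T A a (T^[b] ω) * coc T A b ω := by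
  induction b generalizing ω with
  | zero => simp [coc]
  | succ b ih =>
    show coc T A ((a + b) + 1) ω = _
    simp only [coc]
    rw [ih (T ω), Function.iterate_succ_apply, mul_assoc]

private lemma norm_coc_pos {Ω : Type*} (T : Ω → Ω) (A : Ω → SL2) (n : ℕ) (ω : Ω) :
    0 < ‖(coc T A n ω : Matrix (Fin 2) (Fin 2) ℝ)‖ := by
  rw [norm_pos_iff]
  intro hzero
  have hdet := (coc T A n ω).2
  rw [hzero] at hdet
  simp [Matrix.det_zero] at hdet

private lemma cocNorm_add {Ω : Type*} (T : Ω → Ω) (A : Ω → SL2) (a b : ℕ) (ω : Ω) :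
    cocNorm T A (a + b) ω ≤ cocNorm T A a (T^[b] ω) + cocNorm T A b ω := by
  have h1 := norm_coc_pos T A a (T^[b] ω)
  have h2 := norm_coc_pos T A b ω
  unfold cocNorm
  rw [coc_add, ← Real.log_mul h1.ne' h2.ne']
  apply Real.log_le_log (norm_coc_pos T A (a + b) ω |>.trans_eq (by rw [coc_add]))
  rw [Matrix.SpecialLinearGroup.coe_mul]
  exact Matrix.l2_opNorm_mul _ _

private lemma conv_aux (k : ℕ) (hk : 0 < k) (c L : ℝ) (h : (1 / (k:ℝ)) * c < L) :
    c < k * L := by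
  have hk' : (0:ℝ) < k := Nat.cast_pos.mpr hk
  rw [one_div, inv_mul_eq_div, div_lt_iff₀ hk'] at h
  linarith [h]

/-- Lemma 3.1 (a): if `(1/k) log‖A_k(ω)‖ < L` for all `ω` and all `N ≤ k ≤ 2N`,
then `(1/n) log‖A_n(ω)‖ < L` for all `ω` and all `n ≥ N`. -/
theorem lemma_aux_a {Ω : Type*} [MetricSpace Ω] [CompactSpace Ω]
    (T : Ω ≃ₜ Ω) (A : Ω → SL2)
    (hA : Continuous fun ω => (A ω : Matrix (Fin 2) (Fin 2) ℝ))
    (L : ℝ) (hL : 0 < L) (N : ℕ) (hN : 0 < N)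
    (h : ∀ ω, ∀ k : ℕ, N ≤ k → k ≤ 2 * N → (1 / k : ℝ) * cocNorm (⇑T) A k ω < L) :
    ∀ ω, ∀ n : ℕ, N ≤ n → (1 / n : ℝ) * cocNorm (⇑T) A n ω < L := by
  have key : ∀ n : ℕ, N ≤ n → ∀ ω, cocNorm (⇑T) A n ω < n * L := by
    intro n
    induction n using Nat.strong_induction_on with
    | _ n ih =>
      intro hn ω
      by_cases h2 : n ≤ 2 * N
      · exact conv_aux n (by omega) _ L (h ω n hn h2)
      · push_neg at h2
        have hsplit : n = (n - N) + N := by omega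
        have h1 := ih (n - N) (by omega) (by omega) (T^[N] ω)
        have h2' : cocNorm (⇑T) A N ω < N * L :=
          conv_aux N hN _ L (h ω N le_rfl (by omega))
        have hadd := cocNorm_add (⇑T) A (n - N) N ω
        rw [hsplit]
        calc cocNorm (⇑T) A ((n - N) + N) ω
            ≤ cocNorm (⇑T) A (n - N) (T^[N] ω) + cocNorm (⇑T) A N ω := hadd
          _ < ((n:ℝ) - N) * L + N * L := by
              have hc : ((n - N : ℕ) : ℝ) = (n:ℝ) - N := by
                rw [Nat.cast_sub (by omega : N ≤ n)]
              rw [hc] at h1; linarith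
          _ = (↑((n - N) + N) : ℝ) * L := by
              push_cast [Nat.cast_sub (by omega : N ≤ n)]; ring
  intro ω n hn
  have hn0 : (0:ℝ) < n := Nat.cast_pos.mpr (by omega)
  have hk := key n hn ω
  rw [one_div, inv_mul_eq_div, div_lt_iff₀ hn0]
  linarith
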